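/- Let G be a finite simple connected graph and X ⊆ V(G) with κ_G(X) = 4 and κ_G(V(G)) = 3, and suppose that κ_{G/vy}(X) < 4 for every X-legal edge vy of G. Then: (i) every separator T of G with |T| = 3 is an anticlique of G; (ii) for every such T, every X-free T-fragment F, every t ∈ T, and every y ∈ F ∩ N_G(t), there exists an X-separator S of G of size 4 with t, y ∈ S, and for every such S and every S-X-fragment B one has |B ∩ T| = 1. -/

import Mathlib

open SimpleGraph

variable {V : Type*} {W : Type*}

/-- `S` is an `X`-separator of `G`: at least two components of `G - S`
contain a vertex of `X`. -/
def SepSet (G : SimpleGraph V) (X S : Set V) : Prop :=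
  ∃ (x y : V) (hx : x ∈ X ∧ x ∉ S) (hy : y ∈ X ∧ y ∉ S),
    ¬ (G.induce Sᶜ).Reachable ⟨x, hx.2⟩ ⟨y, hy.2⟩

/-- `κ_G(X)`: the largest `k ≤ |X| - 1` such that every `X`-separator of `G`
has at least `k` vertices. -/
noncomputable def graphKappa (G : SimpleGraph V) (X : Set V) : ℕ :=
  sSup {k : ℕ | k ≤ X.ncard - 1 ∧ ∀ S : Set V, SepSet G X S → k ≤ S.ncard}

/-- `G/vy`: the graph obtained from `G` by contracting the edge `vy` into `v`,
i.e. `y` is removed (it becomes an isolated vertex of the ambient type) and an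
edge `vz` is added for every `z` with `yz ∈ E(G)` and `vz ∉ E(G)`. -/
def contractEdge (G : SimpleGraph V) (v y : V) : SimpleGraph V where
  Adj a b := a ≠ y ∧ b ≠ y ∧ a ≠ b ∧
    (G.Adj a b ∨ (a = v ∧ G.Adj y b) ∨ (b = v ∧ G.Adj a y))
  symm := by
    constructor
    rintro a b ⟨ha, hb, hab, h⟩
    refine ⟨hb, ha, hab.symm, ?_⟩
    rcases h with h | ⟨rfl, h⟩ | ⟨rfl, h⟩
    · exact Or.inl h.symm
    · exact Or.inr (Or.inr ⟨rfl, h.symm⟩)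
    · exact Or.inr (Or.inl ⟨rfl, h.symm⟩)
  loopless := by constructor; rintro a ⟨_, _, h, _⟩; exact h rfl

/-- `F` is an `S`-fragment of `G`: a union of the vertex sets of at least one
but not all components of `G - S`. -/
def IsFragment (G : SimpleGraph V) (S F : Set V) : Prop :=
  F.Nonempty ∧ Disjoint F S ∧ (Sᶜ \ F).Nonempty ∧
    ∀ a ∈ F, ∀ b, G.Adj a b → b ∉ S → b ∈ F

/-- `B` is an `S`-`X`-fragment of `G`: an `S`-fragment such that both `B` and
its complementary fragment `Sᶜ \ B` contain a vertex of `X`. -/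
def IsXFragment (G : SimpleGraph V) (X S B : Set V) : Prop :=
  IsFragment G S B ∧ (B ∩ X).Nonempty ∧ ((Sᶜ \ B) ∩ X).Nonempty

section Helpers

variable {V : Type*} {G : SimpleGraph V} {S T F B X : Set V} {t y : V}

/-- Connectivity in `G` avoiding the set `S`, as a relation on the ambient type. -/
def ConnOff (G : SimpleGraph V) (S : Set V) : V → V → Prop :=
  Relation.ReflTransGen (fun x y => G.Adj x y ∧ x ∉ S ∧ y ∉ S)

lemma connOff_symm {a b : V} (h : ConnOff G S a b) : ConnOff G S b a := by
  refine (@Relation.ReflTransGen.stdSymm _ _ ⟨?_⟩).symm _ _ h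
  rintro x y ⟨h1, h2, h3⟩
  exact ⟨h1.symm, h3, h2⟩

lemma connOff_of_reachable (a b : ↥(Sᶜ)) (h : (G.induce Sᶜ).Reachable a b) :
    ConnOff G S ↑a ↑b := by
  obtain ⟨w⟩ := h
  induction w with
  | nil => exact Relation.ReflTransGen.refl
  | @cons u v _ hadj p ih =>
    exact Relation.ReflTransGen.head ⟨hadj, u.2, v.2⟩ ih

lemma reachable_of_connOff {a b : V} (h : ConnOff G S a b) :
    ∀ (ha : a ∈ Sᶜ) (hb : b ∈ Sᶜ), (G.induce Sᶜ).Reachable ⟨a, ha⟩ ⟨b, hb⟩ := by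
  induction h with
  | refl => exact fun ha hb => Reachable.refl _
  | @tail b c h1 hstep ih =>
    intro ha hc
    have hadj : (G.induce Sᶜ).Adj ⟨b, hstep.2.1⟩ ⟨c, hc⟩ := hstep.1
    exact (ih ha hstep.2.1).trans hadj.reachable

lemma sepSet_mk {x x' : V} (hx : x ∈ X) (hxS : x ∉ S) (hx' : x' ∈ X) (hx'S : x' ∉ S)
    (h : ¬ ConnOff G S x x') : SepSet G X S :=
  ⟨x, x', ⟨hx, hxS⟩, ⟨hx', hx'S⟩, fun hr => h (connOff_of_reachable _ _ hr)⟩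

lemma sepSet_elim (h : SepSet G X S) :
    ∃ x x' : V, x ∈ X ∧ x ∉ S ∧ x' ∈ X ∧ x' ∉ S ∧ ¬ ConnOff G S x x' := by
  obtain ⟨x, x', hx, hx', hr⟩ := h
  exact ⟨x, x', hx.1, hx.2, hx'.1, hx'.2,
    fun hc => hr (reachable_of_connOff hc hx.2 hx'.2)⟩

lemma connOff_closed {C : Set V} (hC : ∀ a ∈ C, ∀ b, G.Adj a b → b ∉ S → b ∈ C)
    {a b : V} (h : ConnOff G S a b) (ha : a ∈ C) : b ∈ C := by
  induction h with
  | refl => exact ha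
  | tail h1 hstep ih => exact hC _ ih _ hstep.1 hstep.2.2

lemma sepSet_of_corner {C : Set V} (hC : ∀ a ∈ C, ∀ b, G.Adj a b → b ∉ S → b ∈ C)
    {x x' : V} (hxC : x ∈ C) (hxX : x ∈ X) (hxS : x ∉ S)
    (hx'X : x' ∈ X) (hx'S : x' ∉ S) (hx'C : x' ∉ C) : SepSet G X S :=
  sepSet_mk hxX hxS hx'X hx'S (fun h => hx'C (connOff_closed hC h hxC))

lemma IsFragment.not_mem_sep (hF : IsFragment G S F) {z : V} (hz : z ∈ F) : z ∉ S :=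
  Set.disjoint_left.mp hF.2.1 hz

lemma exists_xfragment (h : SepSet G X S) : ∃ B, IsXFragment G X S B := by
  obtain ⟨x, x', hxX, hxS, hx'X, hx'S, hnc⟩ := sepSet_elim h
  refine ⟨{z | z ∉ S ∧ ConnOff G S x z}, ⟨⟨x, hxS, Relation.ReflTransGen.refl⟩,
    Set.disjoint_left.mpr fun _ hz hzS => hz.1 hzS, ⟨x', hx'S, fun hc => hnc hc.2⟩,
    fun a ha b hadj hbS => ⟨hbS, ha.2.tail ⟨hadj, ha.1, hbS⟩⟩⟩,
    ⟨x, ⟨hxS, Relation.ReflTransGen.refl⟩, hxX⟩,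
    ⟨x', ⟨hx'S, fun hc => hnc hc.2⟩, hx'X⟩⟩

lemma xfragment_compl (h : IsXFragment G X S B) : IsXFragment G X S (Sᶜ \ B) := by
  obtain ⟨⟨hne, hdisj, hcompl, hcl⟩, hBX, hBX'⟩ := h
  have hBS : ∀ z ∈ B, z ∉ S := fun z hz => Set.disjoint_left.mp hdisj hz
  have hclc : ∀ a ∈ Sᶜ \ B, ∀ b, G.Adj a b → b ∉ S → b ∈ Sᶜ \ B := by
    intro a ha b hadj hbS
    refine ⟨hbS, fun hbB => ha.2 (hcl b hbB a hadj.symm ha.1)⟩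
  refine ⟨⟨hcompl, Set.disjoint_left.mpr fun _ hz hzS => hz.1 hzS, ?_, hclc⟩, hBX', ?_⟩
  · obtain ⟨x0, hx0⟩ := hne
    exact ⟨x0, hBS _ hx0, fun hc => hc.2 hx0⟩
  · obtain ⟨x0, hx0B, hx0X⟩ := hBX
    exact ⟨x0, ⟨⟨hBS _ hx0B, fun hc => hc.2 hx0B⟩, hx0X⟩⟩

lemma kappa_mem (G : SimpleGraph V) (X : Set V) :
    graphKappa G X ≤ X.ncard - 1 ∧
      ∀ S : Set V, SepSet G X S → graphKappa G X ≤ S.ncard := by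
  have hbdd : BddAbove {k : ℕ | k ≤ X.ncard - 1 ∧ ∀ S : Set V, SepSet G X S → k ≤ S.ncard} :=
    ⟨X.ncard - 1, fun k hk => hk.1⟩
  have hne : {k : ℕ | k ≤ X.ncard - 1 ∧ ∀ S : Set V, SepSet G X S → k ≤ S.ncard}.Nonempty :=
    ⟨0, Nat.zero_le _, fun S _ => Nat.zero_le _⟩
  exact Nat.sSup_mem hne hbdd

lemma kappa_lt_elim {G' : SimpleGraph V} (hcard : 4 ≤ X.ncard - 1)
    (h : graphKappa G' X < 4) : ∃ S, SepSet G' X S ∧ S.ncard < 4 := by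
  by_contra hc
  push_neg at hc
  have h4 : (4 : ℕ) ∈ {k : ℕ | k ≤ X.ncard - 1 ∧ ∀ S : Set V, SepSet G' X S → k ≤ S.ncard} :=
    ⟨hcard, fun S hS => hc S hS⟩
  have := le_csSup ⟨X.ncard - 1, fun k hk => hk.1⟩ h4
  exact absurd h (not_lt.mpr this)

lemma connOff_contract_not_mem [DecidableEq V] (hty : G.Adj t y) (htS : t ∉ S) {a b : V}
    (h : ConnOff G S a b) :
    ConnOff (contractEdge G t y) S (if a = y then t else a) (if b = y then t else b) := by
  induction h with
  | refl => exact Relation.ReflTransGen.refl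
  | @tail b c h1 hstep ih =>
    refine ih.trans ?_
    obtain ⟨hadj, hbS, hcS⟩ := hstep
    by_cases hb : b = y
    · by_cases hc : c = y
      · exact absurd (hb.trans hc.symm) hadj.ne
      · rw [if_pos hb, if_neg hc]
        by_cases hct : c = t
        · rw [hct]
        · exact Relation.ReflTransGen.single
            ⟨⟨hty.ne, hc, fun h => hct h.symm,
              Or.inr (Or.inl ⟨rfl, hb ▸ hadj⟩)⟩, htS, hcS⟩
    · rw [if_neg hb]
      by_cases hc : c = y
      · rw [if_pos hc]
        by_cases hbt : b = t
        · rw [hbt]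
        · exact Relation.ReflTransGen.single
            ⟨⟨hb, hty.ne, hbt, Or.inr (Or.inr ⟨rfl, hc ▸ hadj⟩)⟩, hbS, htS⟩
      · rw [if_neg hc]
        exact Relation.ReflTransGen.single ⟨⟨hb, hc, hadj.ne, Or.inl hadj⟩, hbS, hcS⟩

lemma connOff_contract_mem {S' : Set V} {a b : V}
    (h : ConnOff G (insert y S') a b) : ConnOff (contractEdge G t y) S' a b := by
  induction h with
  | refl => exact Relation.ReflTransGen.refl
  | @tail b c h1 hstep ih =>
    obtain ⟨hadj, hbS, hcS⟩ := hstep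
    have hb : b ≠ y := fun h => hbS (h ▸ Set.mem_insert _ _)
    have hc : c ≠ y := fun h => hcS (h ▸ Set.mem_insert _ _)
    exact ih.tail ⟨⟨hb, hc, hadj.ne, Or.inl hadj⟩,
      fun h => hbS (Set.mem_insert_of_mem _ h), fun h => hcS (Set.mem_insert_of_mem _ h)⟩

lemma exists_sep_four [Fintype V] [DecidableEq V]
    (hX4 : ∀ S : Set V, SepSet G X S → 4 ≤ S.ncard) (hcard : 4 ≤ X.ncard - 1)
    (hlt : graphKappa (contractEdge G t y) X < 4)
    (hty : G.Adj t y) (hyX : y ∉ X) :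
    ∃ S, SepSet G X S ∧ S.ncard = 4 ∧ t ∈ S ∧ y ∈ S := by
  obtain ⟨S', hS', hS'lt⟩ := kappa_lt_elim hcard hlt
  obtain ⟨x, x', hxX, hxS', hx'X, hx'S', hnc⟩ := sepSet_elim hS'
  have hxy : x ≠ y := fun h => hyX (h ▸ hxX)
  have hx'y : x' ≠ y := fun h => hyX (h ▸ hx'X)
  by_cases htS' : t ∈ S'
  · have hsep : SepSet G X (insert y S') := by
      refine sepSet_mk hxX ?_ hx'X ?_ ?_
      · simp only [Set.mem_insert_iff]; rintro (h | h); exacts [hxy h, hxS' h]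
      · simp only [Set.mem_insert_iff]; rintro (h | h); exacts [hx'y h, hx'S' h]
      · exact fun h => hnc (connOff_contract_mem h)
    refine ⟨insert y S', hsep, ?_, Set.mem_insert_of_mem _ htS', Set.mem_insert _ _⟩
    have h1 : (insert y S').ncard ≤ S'.ncard + 1 := Set.ncard_insert_le _ _
    have h2 := hX4 _ hsep
    omega
  · exfalso
    have hsepG : SepSet G X S' := by
      refine sepSet_mk hxX hxS' hx'X hx'S' fun h => hnc ?_
      have := connOff_contract_not_mem hty htS' h
      rwa [if_neg hxy, if_neg hx'y] at this
    have := hX4 _ hsepG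
    omega

lemma crossing_nonempty [Fintype V]
    (hX4 : ∀ S : Set V, SepSet G X S → 4 ≤ S.ncard)
    (hF : IsFragment G T F) (hFX : Disjoint F X)
    (hS4 : S.ncard = 4) (hyS : y ∈ S) (hyF : y ∈ F)
    (hB : IsXFragment G X S B) : (B ∩ T).Nonempty := by
  by_contra hBT
  have hBT' : ∀ z ∈ B, z ∉ T := fun z hz hzT => hBT ⟨z, hz, hzT⟩
  obtain ⟨hBfrag, hBX, hBX'⟩ := hB
  obtain ⟨x0, hx0B, hx0X⟩ := hBX
  obtain ⟨x', hx'mem, hx'X⟩ := hBX'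
  have hx0F : x0 ∉ F := Set.disjoint_right.mp hFX hx0X
  have hcl : ∀ a ∈ B \ F, ∀ b, G.Adj a b → b ∉ S \ F → b ∈ B \ F := by
    rintro a ⟨haB, haF⟩ b hadj hbZ
    have haT : a ∉ T := hBT' a haB
    by_cases hbS : b ∈ S
    · have hbF : b ∈ F := by_contra fun hbF => hbZ ⟨hbS, hbF⟩
      exact absurd (hF.2.2.2 b hbF a hadj.symm haT) haF
    · have hbB : b ∈ B := hBfrag.2.2.2 a haB b hadj hbS
      exact ⟨hbB, fun hbF => haF (hF.2.2.2 b hbF a hadj.symm haT)⟩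
  have hsep : SepSet G X (S \ F) := by
    refine sepSet_of_corner hcl (x := x0) (x' := x') ⟨hx0B, hx0F⟩ hx0X
      (fun h => hBfrag.not_mem_sep hx0B h.1) hx'X (fun h => hx'mem.1 h.1)
      (fun h => hx'mem.2 h.1)
  have h4 := hX4 _ hsep
  have hsub : S \ F ⊆ S \ {y} := fun z hz =>
    ⟨hz.1, fun hzy => hz.2 ((Set.mem_singleton_iff.mp hzy) ▸ hyF)⟩
  have hle : (S \ F).ncard ≤ (S \ {y}).ncard := Set.ncard_le_ncard hsub (Set.toFinite _)
  have heq : (S \ {y}).ncard = S.ncard - 1 := Set.ncard_diff_singleton_of_mem hyS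
  omega

lemma crossing_card [Fintype V]
    (hX4 : ∀ S : Set V, SepSet G X S → 4 ≤ S.ncard)
    (hF : IsFragment G T F) (hFX : Disjoint F X) (hT3 : T.ncard = 3) (htT : t ∈ T)
    (hS4 : S.ncard = 4) (htS : t ∈ S) (hyS : y ∈ S) (hyF : y ∈ F)
    (hB : IsXFragment G X S B) :
    (B ∩ T).ncard = 1 ∧ ((Sᶜ \ B) ∩ T).ncard = 1 ∧ (S ∩ T).ncard = 1 := by
  have h1 := crossing_nonempty hX4 hF hFX hS4 hyS hyF hB
  have h2 := crossing_nonempty hX4 hF hFX hS4 hyS hyF (xfragment_compl hB)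
  have hBS : ∀ z ∈ B, z ∉ S := fun z hz => hB.1.not_mem_sep hz
  have hunion : (B ∩ T) ∪ ((Sᶜ \ B) ∩ T) ∪ (S ∩ T) = T := by
    ext z
    simp only [Set.mem_union, Set.mem_inter_iff, Set.mem_diff, Set.mem_compl_iff]
    constructor
    · rintro ((⟨_, h⟩ | ⟨_, h⟩) | ⟨_, h⟩) <;> exact h
    · intro hzT
      by_cases hzS : z ∈ S
      · exact Or.inr ⟨hzS, hzT⟩
      · by_cases hzB : z ∈ B
        · exact Or.inl (Or.inl ⟨hzB, hzT⟩)
        · exact Or.inl (Or.inr ⟨⟨hzS, hzB⟩, hzT⟩)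
  have d1 : Disjoint (B ∩ T) ((Sᶜ \ B) ∩ T) :=
    Set.disjoint_left.mpr fun _ hz hz' => hz'.1.2 hz.1
  have d2 : Disjoint ((B ∩ T) ∪ ((Sᶜ \ B) ∩ T)) (S ∩ T) := by
    refine Set.disjoint_left.mpr ?_
    rintro z (⟨hzB, _⟩ | ⟨hzB, _⟩) hz'
    · exact hBS z hzB hz'.1
    · exact hzB.1 hz'.1
  have hcards : (B ∩ T).ncard + ((Sᶜ \ B) ∩ T).ncard + (S ∩ T).ncard = 3 := by
    have := Set.ncard_union_eq d2 (Set.toFinite _) (Set.toFinite _)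
    rw [hunion, Set.ncard_union_eq d1 (Set.toFinite _) (Set.toFinite _)] at this
    omega
  have p1 : 0 < (B ∩ T).ncard := (Set.ncard_pos (Set.toFinite _)).mpr h1
  have p2 : 0 < ((Sᶜ \ B) ∩ T).ncard := (Set.ncard_pos (Set.toFinite _)).mpr h2
  have p3 : 0 < (S ∩ T).ncard := (Set.ncard_pos (Set.toFinite _)).mpr ⟨t, htS, htT⟩
  omega

lemma exists_adj_in_frag [Fintype V]
    (hV3 : ∀ S : Set V, SepSet G Set.univ S → 3 ≤ S.ncard)
    (hF : IsFragment G T F) (hT3 : T.ncard = 3) (htT : t ∈ T) :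
    ∃ y ∈ F, G.Adj t y := by
  by_contra hc
  push_neg at hc
  obtain ⟨u, huF⟩ := hF.1
  have hsep : SepSet G Set.univ (T \ {t}) := by
    refine sepSet_of_corner (C := F) ?_ huF (Set.mem_univ _)
      (fun h => hF.not_mem_sep huF h.1) (Set.mem_univ t)
      (fun h => h.2 rfl) (Set.disjoint_right.mp hF.2.1 htT)
    intro a haF b hadj hbZ
    by_cases hbT : b ∈ T
    · have hbt : b = t := by_contra fun h => hbZ ⟨hbT, h⟩
      exact absurd (hbt ▸ hadj.symm) (hc a haF)
    · exact hF.2.2.2 a haF b hadj hbT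
  have := hV3 _ hsep
  have : (T \ {t}).ncard = T.ncard - 1 := Set.ncard_diff_singleton_of_mem htT
  omega

lemma exists_xfree_fragment
    (hX4 : ∀ S : Set V, SepSet G X S → 4 ≤ S.ncard)
    (hT : SepSet G Set.univ T) (hT3 : T.ncard = 3) :
    ∃ F, IsFragment G T F ∧ Disjoint F X := by
  obtain ⟨u, w, _, huT, _, hwT, hnc⟩ := sepSet_elim hT
  set Bu := {z | z ∉ T ∧ ConnOff G T u z} with hBu
  set Bw := {z | z ∉ T ∧ ConnOff G T w z} with hBw
  have hclu : ∀ a ∈ Bu, ∀ b, G.Adj a b → b ∉ T → b ∈ Bu :=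
    fun a ha b hadj hb => ⟨hb, ha.2.tail ⟨hadj, ha.1, hb⟩⟩
  have hclw : ∀ a ∈ Bw, ∀ b, G.Adj a b → b ∉ T → b ∈ Bw :=
    fun a ha b hadj hb => ⟨hb, ha.2.tail ⟨hadj, ha.1, hb⟩⟩
  have hfragu : IsFragment G T Bu :=
    ⟨⟨u, huT, Relation.ReflTransGen.refl⟩, Set.disjoint_left.mpr fun _ hz h => hz.1 h,
      ⟨w, hwT, fun h => hnc h.2⟩, hclu⟩
  have hfragw : IsFragment G T Bw :=
    ⟨⟨w, hwT, Relation.ReflTransGen.refl⟩, Set.disjoint_left.mpr fun _ hz h => hz.1 h,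
      ⟨u, huT, fun h => hnc (connOff_symm h.2)⟩, hclw⟩
  by_cases h1 : Disjoint Bu X
  · exact ⟨Bu, hfragu, h1⟩
  by_cases h2 : Disjoint Bw X
  · exact ⟨Bw, hfragw, h2⟩
  exfalso
  obtain ⟨x, hxBu, hxX⟩ := Set.not_disjoint_iff.mp h1
  obtain ⟨x', hx'Bw, hx'X⟩ := Set.not_disjoint_iff.mp h2
  have hsep : SepSet G X T := by
    refine sepSet_mk hxX hxBu.1 hx'X hx'Bw.1 fun hconn => ?_
    have hx'Bu : x' ∈ Bu := connOff_closed hclu hconn hxBu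
    exact hnc (hx'Bu.2.trans (connOff_symm hx'Bw.2))
  have := hX4 _ hsep
  omega

end Helpers

/-- Claim: let `G` be a finite simple connected graph and `X ⊆ V(G)` with
`κ_G(X) = 4` and `κ_G(V(G)) = 3`, such that `κ_{G/vy}(X) < 4` for every
`X`-legal edge `vy` of `G`.  Then for every separator `T` of `G` with
`|T| = 3`:
(i) `T` is an anticlique of `G`, and
(ii) for every `X`-free `T`-fragment `F`, every `t ∈ T` and every
`y ∈ F ∩ N_G(t)`, there is an `X`-separator `S` of size `4` with `t, y ∈ S`,
and for every such `S` and every `S`-`X`-fragment `B` one has `|B ∩ T| = 1`. -/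
theorem separator_anticlique_claim {V : Type*} [Fintype V] (G : SimpleGraph V)
    (hconn : G.Connected) (X : Set V)
    (hX : graphKappa G X = 4) (hV : graphKappa G Set.univ = 3)
    (hcontr : ∀ v y : V, G.Adj v y → y ∉ X →
      graphKappa (contractEdge G v y) X < 4)
    (T : Set V) (hT : SepSet G Set.univ T) (hT3 : T.ncard = 3) :
    (∀ a ∈ T, ∀ b ∈ T, ¬ G.Adj a b) ∧
    (∀ F : Set V, IsFragment G T F → Disjoint F X →
      ∀ t ∈ T, ∀ y ∈ F, G.Adj t y →
        (∃ S : Set V, SepSet G X S ∧ S.ncard = 4 ∧ t ∈ S ∧ y ∈ S) ∧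
        (∀ S : Set V, SepSet G X S → S.ncard = 4 → t ∈ S → y ∈ S →
          ∀ B : Set V, IsXFragment G X S B → (B ∩ T).ncard = 1)) := by
  classical
  obtain ⟨hXcard, hX4⟩ : 4 ≤ X.ncard - 1 ∧ ∀ S : Set V, SepSet G X S → 4 ≤ S.ncard := by
    have h := kappa_mem G X
    rw [hX] at h
    exact h
  have hV3 : ∀ S : Set V, SepSet G Set.univ S → 3 ≤ S.ncard := by
    have h := kappa_mem G Set.univ
    rw [hV] at h
    exact h.2
  constructor
  · -- (i) anticlique
    intro a ha b hb hab
    have hne : a ≠ b := hab.ne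
    obtain ⟨c, hcT, hca, hcb⟩ : ∃ c ∈ T, c ≠ a ∧ c ≠ b := by
      by_contra hc
      push_neg at hc
      have hsub : T ⊆ {a, b} := by
        intro z hz
        rcases eq_or_ne z a with h | h
        · exact Or.inl h
        · exact Or.inr (hc z hz h)
      have := Set.ncard_le_ncard hsub (Set.toFinite _)
      have h2 : ({a, b} : Set V).ncard ≤ 2 := by
        have := Set.ncard_insert_le a ({b} : Set V)
        simpa using this
      omega
    obtain ⟨F, hF, hFX⟩ := exists_xfree_fragment hX4 hT hT3
    obtain ⟨y, hyF, hcy⟩ := exists_adj_in_frag hV3 hF hT3 hcT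
    have hyX : y ∉ X := Set.disjoint_left.mp hFX hyF
    obtain ⟨S, hSsep, hS4, hcS, hyS⟩ :=
      exists_sep_four hX4 hXcard (hcontr c y hcy hyX) hcy hyX
    obtain ⟨B, hB⟩ := exists_xfragment hSsep
    obtain ⟨hc1, hc2, hc3⟩ := crossing_card hX4 hF hFX hT3 hcT hS4 hcS hyS hyF hB
    -- S ∩ T = {c}
    obtain ⟨c0, hc0⟩ := Set.ncard_eq_one.mp hc3
    have hcc0 : c = c0 := by
      have : c ∈ ({c0} : Set V) := hc0 ▸ (⟨hcS, hcT⟩ : c ∈ S ∩ T)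
      exact this
    have hmemS : ∀ z ∈ T, z ≠ c → z ∉ S := by
      intro z hzT hzc hzS
      have : z ∈ ({c0} : Set V) := hc0 ▸ (⟨hzS, hzT⟩ : z ∈ S ∩ T)
      exact hzc (this.trans hcc0.symm ▸ rfl)
    have haS : a ∉ S := hmemS a ha (fun h => hca h.symm)
    have hbS : b ∉ S := hmemS b hb (fun h => hcb h.symm)
    obtain ⟨z1, hz1⟩ := Set.ncard_eq_one.mp hc1
    obtain ⟨z2, hz2⟩ := Set.ncard_eq_one.mp hc2
    have hside : ∀ {p q : V}, p ∈ T → q ∈ T → G.Adj p q → p ∈ B → q ∉ S → False := by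
      intro p q hpT hqT hpq hpB hqS
      have hqB : q ∈ B := hB.1.2.2.2 p hpB q hpq hqS
      -- then p, q ∈ B ∩ T, p ≠ q
      have h1 : p ∈ ({z1} : Set V) := hz1 ▸ (⟨hpB, hpT⟩ : p ∈ B ∩ T)
      have h2 : q ∈ ({z1} : Set V) := hz1 ▸ (⟨hqB, hqT⟩ : q ∈ B ∩ T)
      exact hpq.ne (h1.trans h2.symm)
    by_cases haB : a ∈ B
    · exact hside ha hb hab haB hbS
    · have haB' : a ∈ Sᶜ \ B := ⟨haS, haB⟩
      by_cases hbB : b ∈ B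
      · exact hside hb ha hab.symm hbB haS
      · have hbB' : b ∈ Sᶜ \ B := ⟨hbS, hbB⟩
        have h1 : a ∈ ({z2} : Set V) := hz2 ▸ (⟨haB', ha⟩ : a ∈ (Sᶜ \ B) ∩ T)
        have h2 : b ∈ ({z2} : Set V) := hz2 ▸ (⟨hbB', hb⟩ : b ∈ (Sᶜ \ B) ∩ T)
        exact hne (h1.trans h2.symm)
  · -- (ii)
    intro F hF hFX t htT y hyF hty
    have hyX : y ∉ X := Set.disjoint_left.mp hFX hyF
    refine ⟨exists_sep_four hX4 hXcard (hcontr t y hty hyX) hty hyX, ?_⟩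
    intro S hSsep hS4 htS hyS B hB
    exact (crossing_card hX4 hF hFX hT3 htT hS4 htS hyS hyF hB).1
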